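/- The sets A = {⌊Φ·n⌋ : n ≥ 1} and B = {⌊Φ·n⌋ + n : n ≥ 1} are disjoint and their union is the set of all positive integers (Beatty's theorem for Φ and Φ²). -/

import Mathlib

noncomputable def Φ : ℝ := (1 + Real.sqrt 5) / 2

lemma sqrt5_pos : (1:ℝ) < Real.sqrt 5 := by
  have : (1:ℝ) = Real.sqrt 1 := (Real.sqrt_one).symm
  rw [this]
  exact Real.sqrt_lt_sqrt (by norm_num) (by norm_num)

lemma phi_gt_one : 1 < Φ := by
  have := sqrt5_pos; unfold Φ; linarith

lemma phi_sq : Φ * Φ = Φ + 1 := by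
  have h5 : Real.sqrt 5 * Real.sqrt 5 = 5 := Real.mul_self_sqrt (by norm_num)
  unfold Φ; ring_nf; nlinarith [h5]

lemma phi_conj : Real.HolderConjugate Φ (Φ + 1) := by
  rw [Real.holderConjugate_iff]
  constructor
  · exact phi_gt_one
  · have h1 : (0:ℝ) < Φ := lt_trans one_pos phi_gt_one
    have h2 : (0:ℝ) < Φ + 1 := by linarith
    field_simp
    nlinarith [phi_sq]

lemma phi_irrational : Irrational Φ := by
  have h5 : Irrational (Real.sqrt 5) := (by norm_num : Nat.Prime 5).irrational_sqrt
  have h : Irrational (((1:ℚ) + Real.sqrt 5) / ((2:ℕ):ℝ)) := (h5.ratCast_add 1).div_natCast (by norm_num)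
  unfold Φ
  convert h using 2 <;> norm_num

theorem beatty_phi :
    let A : Set ℤ := {x | ∃ n : ℕ, 1 ≤ n ∧ x = ⌊Φ * (n : ℝ)⌋}
    let B : Set ℤ := {x | ∃ n : ℕ, 1 ≤ n ∧ x = ⌊Φ * (n : ℝ)⌋ + n}
    A ∩ B = ∅ ∧ A ∪ B = {x : ℤ | 0 < x} := by
  intro A B
  have hΦ1 : Irrational (Φ + 1) := by simpa using phi_irrational.add_natCast 1
  have hA : A = {x | ∃ k > 0, beattySeq Φ k = x} := by
    ext x
    constructor
    · rintro ⟨n, hn, rfl⟩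
      exact ⟨n, by exact_mod_cast hn, by rw [beattySeq, mul_comm]; norm_num⟩
    · rintro ⟨k, hk, rfl⟩
      refine ⟨k.toNat, by omega, ?_⟩
      have hc : ((k.toNat : ℕ) : ℝ) = (k : ℝ) := by exact_mod_cast Int.toNat_of_nonneg hk.le
      rw [beattySeq, mul_comm, hc]
  have key : ∀ m : ℤ, beattySeq (Φ + 1) m = ⌊Φ * (m : ℝ)⌋ + m := by
    intro m
    rw [beattySeq, mul_comm, add_mul, one_mul, Int.floor_add_intCast]
  have hB : B = {x | ∃ k > 0, beattySeq (Φ + 1) k = x} := by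
    ext x
    constructor
    · rintro ⟨n, hn, rfl⟩
      refine ⟨n, by exact_mod_cast hn, ?_⟩
      rw [key]; norm_num
    · rintro ⟨k, hk, rfl⟩
      refine ⟨k.toNat, by omega, ?_⟩
      have hc : ((k.toNat : ℕ) : ℝ) = (k : ℝ) := by exact_mod_cast Int.toNat_of_nonneg hk.le
      have hc2 : ((k.toNat : ℕ) : ℤ) = k := Int.toNat_of_nonneg hk.le
      rw [key, hc, hc2]
  have hdisj : A ∩ B = ∅ := by
    rw [hA, hB, ← hΦ1.beattySeq'_pos_eq]
    rw [Set.eq_empty_iff_forall_notMem]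
    rintro x ⟨⟨k, hk, hkx⟩, ⟨m, hm, hmx⟩⟩
    have h1 : x ∈ {x | ∃ k, beattySeq Φ k = x} := ⟨k, hkx⟩
    have h2 : x ∈ {x | ∃ k, beattySeq' (Φ + 1) k = x} := ⟨m, hmx⟩
    rw [← compl_beattySeq phi_conj] at h2
    exact h2 h1
  refine ⟨hdisj, ?_⟩
  have hsd := phi_irrational.beattySeq_symmDiff_beattySeq_pos phi_conj
  have hu : A ∪ B = symmDiff A B := by
    rw [Set.symmDiff_def]
    ext x
    simp only [Set.mem_union, Set.sup_eq_union, Set.mem_diff]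
    constructor
    · rintro (h | h)
      · exact Or.inl ⟨h, fun hb => Set.eq_empty_iff_forall_notMem.mp hdisj x ⟨h, hb⟩⟩
      · exact Or.inr ⟨h, fun ha => Set.eq_empty_iff_forall_notMem.mp hdisj x ⟨ha, h⟩⟩
    · rintro (⟨h, -⟩ | ⟨h, -⟩)
      exacts [Or.inl h, Or.inr h]
  rw [hu, hA, hB]
  exact hsd
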